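/- Let $f:[0,1]\to\mathbb{R}$ satisfy $f' \in L^2[0,1]$. Then $f(x) = f(0) + (f(1)-f(0))x + \sum_{j=0}^\infty \sum_{k=0}^{2^j-1} d_{j,k}\Psi_{j,k}(x)$ with $d_{j,k} = -2^{j/2}(f(\tfrac{k+1}{2^j}) - 2f(\tfrac{k+1/2}{2^j}) + f(\tfrac{k}{2^j}))$, where the series converges in $L^2[0,1]$. -/

import Mathlib

open MeasureTheory Filter

/-- The Faber–Schauder triangular function `Ψ_{j,k}` on `[0,1]` (explicit
piecewise linear form). -/
noncomputable def FSfun (j k : ℕ) (x : ℝ) : ℝ :=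
  (2:ℝ) ^ ((j : ℝ) / 2) * max (x - (k : ℝ) / 2 ^ j) 0
    - (2:ℝ) ^ ((j : ℝ) / 2 + 1) * max (x - ((k : ℝ) + 1 / 2) / 2 ^ j) 0
    + (2:ℝ) ^ ((j : ℝ) / 2) * max (x - ((k : ℝ) + 1) / 2 ^ j) 0

/-- Faber–Schauder expansion: for absolutely continuous `f` with `f' ∈ L²[0,1]`,
the partial sums `f(0) + (f(1)-f(0))x + ∑_{j≤J}∑_k d_{j,k} Ψ_{j,k}(x)` with
`d_{j,k} = -2^{j/2}(f((k+1)/2^j) - 2 f((k+1/2)/2^j) + f(k/2^j))` converge to `f`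
in `L²[0,1]`. -/

lemma FS_mid (j : ℕ) : (2:ℝ) ^ ((j : ℝ) / 2 + 1) = 2 * (2:ℝ) ^ ((j : ℝ) / 2) := by
  rw [Real.rpow_add_one (by norm_num : (2:ℝ) ≠ 0)]; ring

lemma FS_sq (j : ℕ) : (2:ℝ) ^ ((j : ℝ) / 2) * (2:ℝ) ^ ((j : ℝ) / 2) = 2 ^ j := by
  rw [← Real.rpow_add (by norm_num : (0:ℝ) < 2)]
  rw [show (j:ℝ)/2 + (j:ℝ)/2 = ((j:ℕ):ℝ) by ring, Real.rpow_natCast]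

lemma FS_zero_left {j k : ℕ} {x : ℝ} (h : x ≤ (k:ℝ) / 2 ^ j) : FSfun j k x = 0 := by
  have h2 : (0:ℝ) < 2 ^ j := by positivity
  have h1 : x ≤ ((k:ℝ) + 1/2) / 2 ^ j := h.trans (by gcongr; linarith)
  have h3 : x ≤ ((k:ℝ) + 1) / 2 ^ j := h.trans (by gcongr; linarith)
  unfold FSfun
  rw [max_eq_right (by linarith), max_eq_right (by linarith), max_eq_right (by linarith)]
  ring

lemma FS_zero_right {j k : ℕ} {x : ℝ} (h : ((k:ℝ) + 1) / 2 ^ j ≤ x) : FSfun j k x = 0 := by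
  have h2 : (0:ℝ) < 2 ^ j := by positivity
  have h1 : ((k:ℝ) + 1/2) / 2 ^ j ≤ x := le_trans (by gcongr; linarith) h
  have h3 : (k:ℝ) / 2 ^ j ≤ x := le_trans (by gcongr; linarith) h
  unfold FSfun
  rw [max_eq_left (by linarith), max_eq_left (by linarith), max_eq_left (by linarith), FS_mid]
  have : (x - (k:ℝ)/2^j) - 2 * (x - ((k:ℝ)+1/2)/2^j) + (x - ((k:ℝ)+1)/2^j) = 0 := by
    field_simp; ring
  linear_combination (2:ℝ) ^ ((j:ℝ)/2) * this

lemma FS_left {j k : ℕ} {x : ℝ} (h1 : (k:ℝ) / 2 ^ j ≤ x) (h2 : x ≤ ((k:ℝ) + 1/2) / 2 ^ j) :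
    FSfun j k x = (2:ℝ) ^ ((j : ℝ) / 2) * (x - (k:ℝ) / 2 ^ j) := by
  have hp : (0:ℝ) < 2 ^ j := by positivity
  have h3 : x ≤ ((k:ℝ) + 1) / 2 ^ j := h2.trans (by gcongr; linarith)
  unfold FSfun
  rw [max_eq_left (by linarith), max_eq_right (by linarith), max_eq_right (by linarith)]
  ring

lemma FS_right {j k : ℕ} {x : ℝ} (h1 : ((k:ℝ) + 1/2) / 2 ^ j ≤ x) (h2 : x ≤ ((k:ℝ) + 1) / 2 ^ j) :
    FSfun j k x = (2:ℝ) ^ ((j : ℝ) / 2) * (((k:ℝ) + 1) / 2 ^ j - x) := by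
  have hp : (0:ℝ) < 2 ^ j := by positivity
  have h0 : (k:ℝ) / 2 ^ j ≤ x := le_trans (by gcongr; linarith) h1
  unfold FSfun
  rw [max_eq_left (by linarith), max_eq_left (by linarith), max_eq_right (by linarith), FS_mid]
  have : (x - (k:ℝ)/2^j) - 2 * (x - ((k:ℝ)+1/2)/2^j) = ((k:ℝ)+1)/2^j - x := by
    field_simp; ring
  linear_combination (2:ℝ) ^ ((j:ℝ)/2) * this

lemma interp (f : ℝ → ℝ) (d : ℕ → ℕ → ℝ)
    (hd : ∀ j k : ℕ, k < 2 ^ j →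
      d j k = -(2:ℝ) ^ ((j : ℝ) / 2) *
        (f (((k : ℝ) + 1) / 2 ^ j) - 2 * f (((k : ℝ) + 1 / 2) / 2 ^ j)
          + f ((k : ℝ) / 2 ^ j))) :
    ∀ n : ℕ, ∀ k : ℕ, k < 2 ^ n → ∀ x : ℝ, (k:ℝ) / 2 ^ n ≤ x → x ≤ ((k:ℝ) + 1) / 2 ^ n →
      f 0 + (f 1 - f 0) * x +
        ∑ j ∈ Finset.range n, ∑ k' ∈ Finset.range (2 ^ j), d j k' * FSfun j k' x
      = f ((k:ℝ) / 2 ^ n) + (x - (k:ℝ) / 2 ^ n) * 2 ^ n *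
          (f (((k:ℝ) + 1) / 2 ^ n) - f ((k:ℝ) / 2 ^ n)) := by
  intro n
  induction n with
  | zero =>
    intro k hk x _ _
    interval_cases k
    simp
    ring
  | succ n ih =>
    intro k hk x hx1 hx2
    set k0 := k / 2 with hk0def
    have hk0 : k0 < 2 ^ n := by
      have : k < 2 * 2 ^ n := by rw [← pow_succ']; exact hk
      omega
    have hpn : (0:ℝ) < 2 ^ n := by positivity
    have hpn1 : (0:ℝ) < 2 ^ (n+1) := by positivity
    have hkcases : k = 2 * k0 ∨ k = 2 * k0 + 1 := by omega
    have hcast1 : 2 * (k0:ℝ) ≤ (k:ℝ) := by exact_mod_cast (by omega : 2 * k0 ≤ k)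
    have hcast2 : (k:ℝ) ≤ 2 * (k0:ℝ) + 1 := by exact_mod_cast (by omega : k ≤ 2 * k0 + 1)
    have hlow : (k0:ℝ) / 2 ^ n ≤ x := by
      refine le_trans ?_ hx1
      rw [div_le_div_iff₀ hpn hpn1, pow_succ]
      nlinarith [mul_le_mul_of_nonneg_right hcast1 hpn.le]
    have hhigh : x ≤ ((k0:ℝ) + 1) / 2 ^ n := by
      refine hx2.trans ?_
      rw [div_le_div_iff₀ hpn1 hpn, pow_succ]
      nlinarith [mul_le_mul_of_nonneg_right hcast2 hpn.le]
    rw [Finset.sum_range_succ]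
    have hsingle : ∑ k' ∈ Finset.range (2 ^ n), d n k' * FSfun n k' x
        = d n k0 * FSfun n k0 x := by
      refine Finset.sum_eq_single_of_mem k0 (Finset.mem_range.mpr hk0) ?_
      intro k' _ hne
      rcases lt_or_gt_of_ne hne with hlt | hgt
      · have : ((k':ℝ) + 1) / 2 ^ n ≤ x := by
          refine le_trans ?_ hlow
          gcongr
          exact_mod_cast (by omega : k' + 1 ≤ k0)
        rw [FS_zero_right this]; ring
      · have : x ≤ (k':ℝ) / 2 ^ n := by
          refine hhigh.trans ?_
          gcongr
          exact_mod_cast (by omega : k0 + 1 ≤ k')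
        rw [FS_zero_left this]; ring
    rw [hsingle, hd n k0 hk0]
    have hsq := FS_sq n
    have IH := ih k0 hk0 x hlow hhigh
    have hδ : ((2:ℝ) ^ n)⁻¹ * 2 ^ n = 1 := inv_mul_cancel₀ hpn.ne'
    have em : ((k0:ℝ) + 1 / 2) / 2 ^ n = (k0:ℝ) / 2 ^ n + ((2:ℝ) ^ n)⁻¹ / 2 := by
      field_simp
    have eb : ((k0:ℝ) + 1) / 2 ^ n = (k0:ℝ) / 2 ^ n + ((2:ℝ) ^ n)⁻¹ := by
      field_simp
    rw [eb] at IH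
    rcases hkcases with hke | hko
    · have hkr : (k:ℝ) = 2 * (k0:ℝ) := by exact_mod_cast hke
      have hxr : x ≤ ((k0:ℝ) + 1/2) / 2 ^ n := by
        refine hx2.trans ?_
        rw [div_le_div_iff₀ hpn1 hpn, hkr, pow_succ]
        nlinarith [hpn.le]
      rw [FS_left hlow hxr]
      have e1 : ((k:ℝ)) / 2 ^ (n+1) = (k0:ℝ) / 2 ^ n := by
        rw [hkr]; field_simp; ring
      have e2 : ((k:ℝ) + 1) / 2 ^ (n+1) = (k0:ℝ) / 2 ^ n + ((2:ℝ) ^ n)⁻¹ / 2 := by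
        rw [hkr]; field_simp; ring
      rw [e1, e2, em, eb]
      linear_combination IH + (-(x - (k0:ℝ)/2^n)) *
        (f ((k0:ℝ)/2^n + ((2:ℝ)^n)⁻¹) - 2 * f ((k0:ℝ)/2^n + ((2:ℝ)^n)⁻¹/2)
          + f ((k0:ℝ)/2^n)) * hsq
    · have hkr : (k:ℝ) = 2 * (k0:ℝ) + 1 := by exact_mod_cast hko
      have hxl : ((k0:ℝ) + 1/2) / 2 ^ n ≤ x := by
        refine le_trans ?_ hx1
        rw [div_le_div_iff₀ hpn hpn1, hkr, pow_succ]
        nlinarith [hpn.le]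
      rw [FS_right hxl hhigh]
      have e1 : ((k:ℝ)) / 2 ^ (n+1) = (k0:ℝ) / 2 ^ n + ((2:ℝ) ^ n)⁻¹ / 2 := by
        rw [hkr]; field_simp; ring
      have e2 : ((k:ℝ) + 1) / 2 ^ (n+1) = (k0:ℝ) / 2 ^ n + ((2:ℝ) ^ n)⁻¹ := by
        rw [hkr]; field_simp; ring
      rw [e1, e2, em, eb]
      linear_combination IH + (-((k0:ℝ)/2^n + ((2:ℝ)^n)⁻¹ - x)) *
        (f ((k0:ℝ)/2^n + ((2:ℝ)^n)⁻¹) - 2 * f ((k0:ℝ)/2^n + ((2:ℝ)^n)⁻¹/2)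
          + f ((k0:ℝ)/2^n)) * hsq
        + (f ((k0:ℝ)/2^n + ((2:ℝ)^n)⁻¹/2) - f ((k0:ℝ)/2^n)) * hδ

lemma sq_integral_le {α : Type*} [MeasurableSpace α] (μ : Measure α) [IsFiniteMeasure μ]
    {g : α → ℝ} (h1 : Integrable g μ) (h2 : Integrable (fun x => g x ^ 2) μ) :
    (∫ x, g x ∂μ) ^ 2 ≤ (μ Set.univ).toReal * ∫ x, g x ^ 2 ∂μ := by
  set c := (μ Set.univ).toReal with hcdef
  have hc : 0 ≤ c := ENNReal.toReal_nonneg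
  set I := ∫ x, g x ∂μ with hIdef
  rcases hc.eq_or_lt with hc0 | hcpos
  · have hμ : μ = 0 := by
      rw [← Measure.measure_univ_eq_zero]
      have := IsFiniteMeasure.measure_univ_lt_top (μ := μ)
      exact (ENNReal.toReal_eq_zero_iff _).mp hc0.symm |>.resolve_right this.ne
    rw [hIdef, hμ]
    simp
  · have key : 0 ≤ ∫ x, (c * g x - I) ^ 2 ∂μ := integral_nonneg fun x => sq_nonneg _
    have expand : ∫ x, (c * g x - I) ^ 2 ∂μ
        = c ^ 2 * (∫ x, g x ^ 2 ∂μ) - 2 * c * I * I + I ^ 2 * c := by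
      have heq : (fun x => (c * g x - I) ^ 2)
          = fun x => c ^ 2 * g x ^ 2 - 2 * c * I * g x + I ^ 2 := by
        funext x; ring
      have iA : Integrable (fun x => c ^ 2 * g x ^ 2 - 2 * c * I * g x) μ := by
        have := (h2.const_mul (c ^ 2)).sub (h1.const_mul (2 * c * I))
        exact this
      have iB : Integrable (fun x => c ^ 2 * g x ^ 2) μ := h2.const_mul _
      have iC : Integrable (fun x => 2 * c * I * g x) μ := h1.const_mul _
      rw [heq]
      rw [integral_add iA (integrable_const _), integral_sub iB iC,
        integral_const_mul, integral_const_mul, integral_const]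
      simp only [smul_eq_mul, measureReal_def, ← hIdef, ← hcdef]
      ring
    rw [expand] at key
    have hfac : 0 ≤ c * (c * (∫ x, g x ^ 2 ∂μ) - I ^ 2) := by nlinarith [key]
    nlinarith [hfac, hcpos]

lemma FSfun_cont (j k : ℕ) : Continuous (FSfun j k) := by
  unfold FSfun
  exact ((continuous_const.mul ((continuous_id.sub continuous_const).max continuous_const)).sub
    (continuous_const.mul ((continuous_id.sub continuous_const).max continuous_const))).add
    (continuous_const.mul ((continuous_id.sub continuous_const).max continuous_const))

set_option maxHeartbeats 1000000 in
theorem faber_schauder_expansion_L2 (f g : ℝ → ℝ)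
    (hg : MemLp g 2 (volume.restrict (Set.Icc (0:ℝ) 1)))
    (hf : ∀ x ∈ Set.Icc (0:ℝ) 1, f x = f 0 + ∫ u in (0:ℝ)..x, g u)
    (d : ℕ → ℕ → ℝ)
    (hd : ∀ j k : ℕ, k < 2 ^ j →
      d j k = -(2:ℝ) ^ ((j : ℝ) / 2) *
        (f (((k : ℝ) + 1) / 2 ^ j) - 2 * f (((k : ℝ) + 1 / 2) / 2 ^ j)
          + f ((k : ℝ) / 2 ^ j)))
    (S : ℕ → ℝ → ℝ)
    (hS : ∀ J x, S J x = f 0 + (f 1 - f 0) * x +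
      ∑ j ∈ Finset.range (J + 1), ∑ k ∈ Finset.range (2 ^ j), d j k * FSfun j k x) :
    Tendsto (fun J => ∫ x in (0:ℝ)..1, (f x - S J x) ^ 2) atTop (nhds 0) := by
  haveI : Fact ((volume : Measure ℝ) (Set.Icc (0:ℝ) 1) < ⊤) :=
    ⟨by rw [Real.volume_Icc]; exact ENNReal.ofReal_lt_top⟩
  have hgi : IntegrableOn g (Set.Icc (0:ℝ) 1) volume := hg.integrable one_le_two
  have hg2i : IntegrableOn (fun x => g x ^ 2) (Set.Icc (0:ℝ) 1) volume := hg.integrable_sq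
  have hgiv : ∀ u v : ℝ, 0 ≤ u → u ≤ v → v ≤ 1 → IntervalIntegrable g volume u v := by
    intro u v h0 huv h1
    refine (hgi.mono_set ?_).intervalIntegrable
    rw [Set.uIcc_of_le huv]
    exact Set.Icc_subset_Icc h0 h1
  have hg2iv : ∀ u v : ℝ, 0 ≤ u → u ≤ v → v ≤ 1 →
      IntervalIntegrable (fun x => g x ^ 2) volume u v := by
    intro u v h0 huv h1
    refine (hg2i.mono_set ?_).intervalIntegrable
    rw [Set.uIcc_of_le huv]
    exact Set.Icc_subset_Icc h0 h1
  have hCS : ∀ u v : ℝ, 0 ≤ u → u ≤ v → v ≤ 1 →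
      (∫ t in u..v, g t) ^ 2 ≤ (v - u) * ∫ t in u..v, g t ^ 2 := by
    intro u v h0 huv h1
    haveI : Fact ((volume : Measure ℝ) (Set.Ioc u v) < ⊤) :=
      ⟨by rw [Real.volume_Ioc]; exact ENNReal.ofReal_lt_top⟩
    have hsub : Set.Ioc u v ⊆ Set.Icc (0:ℝ) 1 :=
      (Set.Ioc_subset_Icc_self).trans (Set.Icc_subset_Icc h0 h1)
    have i1 : Integrable g (volume.restrict (Set.Ioc u v)) := hgi.mono_set hsub
    have i2 : Integrable (fun x => g x ^ 2) (volume.restrict (Set.Ioc u v)) :=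
      hg2i.mono_set hsub
    have hle := sq_integral_le (volume.restrict (Set.Ioc u v)) i1 i2
    rw [intervalIntegral.integral_of_le huv, intervalIntegral.integral_of_le huv]
    have hmeas : ((volume.restrict (Set.Ioc u v)) Set.univ).toReal = v - u := by
      rw [Measure.restrict_apply_univ, Real.volume_Ioc, ENNReal.toReal_ofReal (by linarith)]
    rwa [hmeas] at hle
  have hfc : ContinuousOn f (Set.Icc (0:ℝ) 1) := by
    have h1 : IntegrableOn g (Set.uIcc (0:ℝ) 1) volume := by
      rwa [Set.uIcc_of_le zero_le_one]
    have h2 : ContinuousOn (fun x => f 0 + ∫ u in (0:ℝ)..x, g u) (Set.uIcc (0:ℝ) 1) :=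
      continuousOn_const.add (intervalIntegral.continuousOn_primitive_interval h1)
    rw [Set.uIcc_of_le zero_le_one] at h2
    exact h2.congr fun x hx => hf x hx
  have hSc : ∀ J, Continuous (S J) := by
    intro J
    have hSeq : S J = fun x => f 0 + (f 1 - f 0) * x +
        ∑ j ∈ Finset.range (J + 1), ∑ k ∈ Finset.range (2 ^ j), d j k * FSfun j k x :=
      funext (hS J)
    rw [hSeq]
    refine (continuous_const.add (continuous_const.mul continuous_id)).add ?_
    refine continuous_finset_sum _ fun j _ => continuous_finset_sum _ fun k _ => ?_
    exact continuous_const.mul (FSfun_cont j k)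
  have key : ∀ J : ℕ, ∫ x in (0:ℝ)..1, (f x - S J x) ^ 2 ≤
      4 * (((2:ℝ) ^ (J+1))⁻¹) ^ 2 * ∫ t in (0:ℝ)..1, g t ^ 2 := by
    intro J
    obtain ⟨n, hn⟩ : ∃ n : ℕ, n = J + 1 := ⟨J + 1, rfl⟩
    rw [← hn]
    have hpn : (0:ℝ) < 2 ^ n := by positivity
    obtain ⟨δ, hδdef⟩ : ∃ δ' : ℝ, δ' = ((2:ℝ) ^ n)⁻¹ := ⟨_, rfl⟩
    have hδpos : 0 < δ := by rw [hδdef]; positivity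
    have hδ2 : δ * 2 ^ n = 1 := by rw [hδdef]; exact inv_mul_cancel₀ hpn.ne'
    rw [← hδdef]
    obtain ⟨a, hadef⟩ : ∃ a' : ℕ → ℝ, a' = fun k : ℕ => (k:ℝ) / 2 ^ n := ⟨_, rfl⟩
    have ha : ∀ k : ℕ, a k = (k:ℝ) / 2 ^ n := fun k => by rw [hadef]
    have hastep : ∀ k : ℕ, a (k+1) = a k + δ := by
      intro k
      rw [ha, ha, hδdef, inv_eq_one_div, ← add_div]
      push_cast
      ring
    have ha0 : a 0 = 0 := by rw [ha]; simp
    have haN : a (2 ^ n) = 1 := by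
      rw [ha, div_eq_one_iff_eq hpn.ne']
      push_cast
      ring
    have hbound : ∀ k : ℕ, k < 2 ^ n → 0 ≤ a k ∧ a (k+1) ≤ 1 := by
      intro k hk
      refine ⟨by rw [ha]; positivity, ?_⟩
      rw [ha, div_le_one hpn]
      have : ((k+1:ℕ):ℝ) ≤ ((2^n:ℕ):ℝ) := Nat.cast_le.mpr (Nat.succ_le_of_lt hk)
      push_cast at this
      exact_mod_cast this
    -- pointwise bound on each dyadic interval
    have hIk : ∀ k : ℕ, k < 2 ^ n → ∀ x ∈ Set.Icc (a k) (a (k+1)),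
        (f x - S J x) ^ 2 ≤ 4 * δ * ∫ t in a k..a (k+1), g t ^ 2 := by
      intro k hk x hx
      obtain ⟨hak0, hak1⟩ := hbound k hk
      have hmono : a k ≤ a (k+1) := by rw [hastep]; linarith
      obtain ⟨hx1, hx2⟩ := hx
      have hx0 : 0 ≤ x := le_trans hak0 hx1
      have hx1' : x ≤ 1 := le_trans hx2 hak1
      have e1 : a (k+1) = ((k:ℝ) + 1) / 2 ^ n := by rw [ha]; push_cast; ring
      have hSx : S J x = f (a k) + (x - a k) * 2 ^ n * (f (a (k+1)) - f (a k)) := by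
        rw [hS J x, hn, ← hn, ha k, e1]
        refine interp f d hd n k hk x ?_ ?_
        · rw [ha k] at hx1; exact hx1
        · rw [e1] at hx2; exact hx2
      have hfsub : ∀ u v : ℝ, 0 ≤ u → u ≤ v → v ≤ 1 →
          f v - f u = ∫ t in u..v, g t := by
        intro u v h0 huv h1
        rw [hf v ⟨le_trans h0 huv, h1⟩, hf u ⟨h0, le_trans huv h1⟩]
        have hsl := intervalIntegral.integral_interval_sub_left
          (hgiv 0 v (le_refl 0) (le_trans h0 huv) h1)
          (hgiv 0 u (le_refl 0) h0 (le_trans huv h1))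
        linarith [hsl]
      have hd1 : f x - f (a k) = ∫ t in a k..x, g t := hfsub (a k) x hak0 hx1 hx1'
      have hd2 : f (a (k+1)) - f (a k) = ∫ t in a k..a (k+1), g t :=
        hfsub (a k) (a (k+1)) hak0 hmono hak1
      have hfd : f x - S J x = (∫ t in a k..x, g t)
          - (x - a k) * 2 ^ n * ∫ t in a k..a (k+1), g t := by
        rw [hSx, ← hd1, ← hd2]; ring
      have hQsnn : 0 ≤ ∫ t in a k..a (k+1), g t ^ 2 :=
        intervalIntegral.integral_nonneg hmono fun t _ => sq_nonneg _
      have hPx2nn : 0 ≤ ∫ t in a k..x, g t ^ 2 :=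
        intervalIntegral.integral_nonneg hx1 fun t _ => sq_nonneg _
      have hP2 : (∫ t in a k..x, g t) ^ 2 ≤ (x - a k) * ∫ t in a k..x, g t ^ 2 :=
        hCS _ _ hak0 hx1 hx1'
      have hPmono : (∫ t in a k..x, g t ^ 2) ≤ ∫ t in a k..a (k+1), g t ^ 2 :=
        intervalIntegral.integral_mono_interval (le_refl (a k)) hx1 hx2
          (Filter.Eventually.of_forall fun t => sq_nonneg _)
          (hg2iv (a k) (a (k+1)) hak0 hmono hak1)
      have hQ2 : (∫ t in a k..a (k+1), g t) ^ 2 ≤ δ * ∫ t in a k..a (k+1), g t ^ 2 := by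
        have hq := hCS (a k) (a (k+1)) hak0 hmono hak1
        have heq : a (k+1) - a k = δ := by rw [hastep]; ring
        rwa [heq] at hq
      have hxδ : x - a k ≤ δ := by rw [hastep] at hx2; linarith
      have ht1 : 0 ≤ (x - a k) * 2 ^ n := mul_nonneg (by linarith) hpn.le
      have ht2 : (x - a k) * 2 ^ n ≤ 1 := by
        calc (x - a k) * 2 ^ n ≤ δ * 2 ^ n := by
              apply mul_le_mul_of_nonneg_right hxδ hpn.le
          _ = 1 := hδ2
      have hP2' : (∫ t in a k..x, g t) ^ 2 ≤ δ * ∫ t in a k..a (k+1), g t ^ 2 := by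
        calc (∫ t in a k..x, g t) ^ 2 ≤ (x - a k) * ∫ t in a k..x, g t ^ 2 := hP2
          _ ≤ δ * ∫ t in a k..a (k+1), g t ^ 2 := mul_le_mul hxδ hPmono hPx2nn hδpos.le
      rw [hfd]
      have hsq2 : ((∫ t in a k..x, g t) - (x - a k) * 2 ^ n * ∫ t in a k..a (k+1), g t) ^ 2
          ≤ 2 * (∫ t in a k..x, g t) ^ 2
            + 2 * ((x - a k) * 2 ^ n) ^ 2 * (∫ t in a k..a (k+1), g t) ^ 2 := by
        nlinarith [sq_nonneg ((∫ t in a k..x, g t) + (x - a k) * 2 ^ n * ∫ t in a k..a (k+1), g t)]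
      have htQ : ((x - a k) * 2 ^ n) ^ 2 * (∫ t in a k..a (k+1), g t) ^ 2
          ≤ (∫ t in a k..a (k+1), g t) ^ 2 := by
        have ht3 : ((x - a k) * 2 ^ n) ^ 2 ≤ 1 := pow_le_one₀ ht1 ht2
        calc ((x - a k) * 2 ^ n) ^ 2 * (∫ t in a k..a (k+1), g t) ^ 2
            ≤ 1 * (∫ t in a k..a (k+1), g t) ^ 2 :=
              mul_le_mul_of_nonneg_right ht3 (sq_nonneg _)
          _ = (∫ t in a k..a (k+1), g t) ^ 2 := one_mul _
      calc ((∫ t in a k..x, g t) - (x - a k) * 2 ^ n * ∫ t in a k..a (k+1), g t) ^ 2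
          ≤ 2 * (∫ t in a k..x, g t) ^ 2
            + 2 * ((x - a k) * 2 ^ n) ^ 2 * (∫ t in a k..a (k+1), g t) ^ 2 := hsq2
        _ ≤ 2 * (δ * ∫ t in a k..a (k+1), g t ^ 2)
            + 2 * (δ * ∫ t in a k..a (k+1), g t ^ 2) := by nlinarith [hP2', htQ, hQ2]
        _ = 4 * δ * ∫ t in a k..a (k+1), g t ^ 2 := by ring
    have hintfs : ∀ k : ℕ, k < 2 ^ n →
        IntervalIntegrable (fun x => (f x - S J x) ^ 2) volume (a k) (a (k+1)) := by
      intro k hk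
      obtain ⟨hak0, hak1⟩ := hbound k hk
      have hmono : a k ≤ a (k+1) := by rw [hastep]; linarith
      apply ContinuousOn.intervalIntegrable
      rw [Set.uIcc_of_le hmono]
      exact (((hfc.mono (Set.Icc_subset_Icc hak0 hak1)).sub (hSc J).continuousOn).pow 2)
    have piece : ∀ k : ℕ, k < 2 ^ n →
        ∫ x in a k..a (k+1), (f x - S J x) ^ 2 ≤
          δ * (4 * δ * ∫ t in a k..a (k+1), g t ^ 2) := by
      intro k hk
      obtain ⟨hak0, hak1⟩ := hbound k hk
      have hmono : a k ≤ a (k+1) := by rw [hastep]; linarith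
      have hm := intervalIntegral.integral_mono_on hmono (hintfs k hk)
        intervalIntegrable_const (hIk k hk)
      rw [intervalIntegral.integral_const, smul_eq_mul] at hm
      have heq : a (k+1) - a k = δ := by rw [hastep]; ring
      rw [heq] at hm
      exact hm
    have hintg2 : ∀ k : ℕ, k < 2 ^ n →
        IntervalIntegrable (fun x => g x ^ 2) volume (a k) (a (k+1)) := by
      intro k hk
      obtain ⟨hak0, hak1⟩ := hbound k hk
      have hmono : a k ≤ a (k+1) := by rw [hastep]; linarith
      exact hg2iv (a k) (a (k+1)) hak0 hmono hak1
    have hsum1 : ∑ k ∈ Finset.range (2 ^ n), ∫ x in a k..a (k+1), (f x - S J x) ^ 2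
        = ∫ x in (0:ℝ)..1, (f x - S J x) ^ 2 := by
      rw [intervalIntegral.sum_integral_adjacent_intervals hintfs, ha0, haN]
    have hsum2 : ∑ k ∈ Finset.range (2 ^ n), ∫ t in a k..a (k+1), g t ^ 2
        = ∫ t in (0:ℝ)..1, g t ^ 2 := by
      rw [intervalIntegral.sum_integral_adjacent_intervals hintg2, ha0, haN]
    calc ∫ x in (0:ℝ)..1, (f x - S J x) ^ 2
        = ∑ k ∈ Finset.range (2 ^ n), ∫ x in a k..a (k+1), (f x - S J x) ^ 2 := hsum1.symm
      _ ≤ ∑ k ∈ Finset.range (2 ^ n), δ * (4 * δ * ∫ t in a k..a (k+1), g t ^ 2) :=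
          Finset.sum_le_sum fun k hk => piece k (Finset.mem_range.mp hk)
      _ = 4 * δ ^ 2 * ∑ k ∈ Finset.range (2 ^ n), ∫ t in a k..a (k+1), g t ^ 2 := by
          rw [Finset.mul_sum]
          exact Finset.sum_congr rfl fun k _ => by ring
      _ = 4 * δ ^ 2 * ∫ t in (0:ℝ)..1, g t ^ 2 := by rw [hsum2]
  have hnn : ∀ J : ℕ, 0 ≤ ∫ x in (0:ℝ)..1, (f x - S J x) ^ 2 := fun J =>
    intervalIntegral.integral_nonneg zero_le_one fun u _ => sq_nonneg _
  have htend : Tendsto (fun J : ℕ => 4 * (((2:ℝ) ^ (J+1))⁻¹) ^ 2 * ∫ t in (0:ℝ)..1, g t ^ 2)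
      atTop (nhds 0) := by
    have h1 : Tendsto (fun J : ℕ => ((1:ℝ)/4) ^ (J+1)) atTop (nhds 0) := by
      have h0 := tendsto_pow_atTop_nhds_zero_of_lt_one (by norm_num : (0:ℝ) ≤ 1/4)
        (by norm_num : (1:ℝ)/4 < 1)
      exact h0.comp (tendsto_add_atTop_nat 1)
    have heq : (fun J : ℕ => 4 * (((2:ℝ) ^ (J+1))⁻¹) ^ 2 * ∫ t in (0:ℝ)..1, g t ^ 2)
        = fun J : ℕ => (4 * ∫ t in (0:ℝ)..1, g t ^ 2) * ((1:ℝ)/4) ^ (J+1) := by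
      funext J
      have h2 : (((2:ℝ) ^ (J+1))⁻¹) ^ 2 = ((1:ℝ)/4) ^ (J+1) := by
        rw [inv_pow, ← pow_mul, one_div, inv_pow,
          show (4:ℝ) = 2^2 by norm_num, ← pow_mul, Nat.mul_comm 2 (J+1)]
      rw [h2]; ring
    rw [heq]
    have h3 := h1.const_mul (4 * ∫ t in (0:ℝ)..1, g t ^ 2)
    simpa using h3
  exact squeeze_zero hnn key htend
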